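/- Let A_1, …, A_N be n×n nonnegative matrices that pairwise commute with respect to the max-times product and satisfy μ(A_i) ≤ 1 for every i. Then there exists an integer q ≥ 1 such that: for each i and each 1 ≤ j ≤ q the entrywise limit Ã_i^{(j)} := lim_{k→∞} A_i^{⊗(kq+j)} exists; and for every p ≥ 1, every word ω ∈ {1,…,N}^p in which the letter i occurs p_i times, and every 1 ≤ j ≤ q, lim_{k→∞} A_ω^{⊗(kq+j)} = (Ã_1^{(j)})^{⊗p_1} ⊗ (Ã_2^{(j)})^{⊗p_2} ⊗ ⋯ ⊗ (Ã_N^{(j)})^{⊗p_N}. -/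

import Mathlib

open Filter Topology

/-- Max-times product of two square nonnegative matrices. -/
noncomputable def mProd {m : Type*} [Fintype m] (A B : Matrix m m NNReal) : Matrix m m NNReal :=
  fun i j => Finset.univ.sup fun k => A i k * B k j

/-- Max-times powers: `mPow A 0 = I`, `mPow A (k+1) = A ⊗ mPow A k`. -/
noncomputable def mPow {m : Type*} [Fintype m] [DecidableEq m] (A : Matrix m m NNReal) :
    ℕ → Matrix m m NNReal
  | 0 => 1
  | k + 1 => mProd A (mPow A k)

/-- Max-times action of a matrix on a nonnegative vector. -/
noncomputable def mVec {m : Type*} [Fintype m] (A : Matrix m m NNReal) (x : m → NNReal) :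
    m → NNReal :=
  fun i => Finset.univ.sup fun k => A i k * x k

/-- Maximum circuit geometric mean of a nonnegative matrix. -/
noncomputable def mu {m : Type*} [Fintype m] [DecidableEq m] (A : Matrix m m NNReal) : NNReal :=
  (Finset.Icc 1 (Fintype.card m)).sup fun ℓ =>
    Finset.univ.sup fun i => (mPow A ℓ i i) ^ ((ℓ : ℝ)⁻¹)

/-- The max-times product `A_{ω_p} ⊗ ⋯ ⊗ A_{ω_1}` associated to a word `ω`. -/
noncomputable def wordProd {m : Type*} [Fintype m] [DecidableEq m] {N : ℕ}
    (A : Fin N → Matrix m m NNReal) : ∀ {p : ℕ}, (Fin p → Fin N) → Matrix m m NNReal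
  | 0, _ => 1
  | p + 1, ω => mProd (A (ω (Fin.last p))) (wordProd A fun i : Fin p => ω i.castSucc)

/-- The max-times product `M 0 ⊗ M 1 ⊗ ⋯ ⊗ M (N-1)` of a finite family, in order. -/
noncomputable def seqProd {m : Type*} [Fintype m] [DecidableEq m] :
    ∀ {N : ℕ}, (Fin N → Matrix m m NNReal) → Matrix m m NNReal
  | 0, _ => 1
  | _ + 1, M => mProd (M 0) (seqProd fun i => M i.succ)


section base
set_option linter.unusedSectionVars false
variable {m : Type*} [Fintype m] [DecidableEq m]

lemma nn_mul_sup (c x y : NNReal) : c * (x ⊔ y) = c * x ⊔ c * y := by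
  rcases le_total x y with h | h
  · rw [sup_eq_right.2 h, sup_eq_right.2 (mul_le_mul_right h c)]
  · rw [sup_eq_left.2 h, sup_eq_left.2 (mul_le_mul_right h c)]

lemma nn_sup_mul (c x y : NNReal) : (x ⊔ y) * c = x * c ⊔ y * c := by
  simp only [mul_comm _ c, nn_mul_sup]

lemma mul_finset_sup {ι : Type*} (s : Finset ι) (f : ι → NNReal) (c : NNReal) :
    c * s.sup f = s.sup fun i => c * f i := by
  classical
  induction s using Finset.induction with
  | empty => simp
  | insert _ _ _ ih => simp [Finset.sup_insert, nn_mul_sup, ih]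

lemma finset_sup_mul {ι : Type*} (s : Finset ι) (f : ι → NNReal) (c : NNReal) :
    s.sup f * c = s.sup fun i => f i * c := by
  simp only [mul_comm _ c, mul_finset_sup]

lemma mProd_apply (A B : Matrix m m NNReal) (i j : m) :
    mProd A B i j = Finset.univ.sup fun k => A i k * B k j := rfl

lemma le_mProd (A B : Matrix m m NNReal) (i j k : m) :
    A i k * B k j ≤ mProd A B i j :=
  Finset.le_sup (f := fun k => A i k * B k j) (Finset.mem_univ k)

lemma mProd_le {A B : Matrix m m NNReal} {i j : m} {C : NNReal}
    (h : ∀ k, A i k * B k j ≤ C) : mProd A B i j ≤ C :=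
  Finset.sup_le fun k _ => h k

lemma mProd_assoc (A B C : Matrix m m NNReal) :
    mProd (mProd A B) C = mProd A (mProd B C) := by
  funext i j
  apply le_antisymm
  · refine mProd_le fun l => ?_
    rw [mProd_apply, finset_sup_mul]
    refine Finset.sup_le fun k _ => ?_
    calc A i k * B k l * (C l j) = A i k * (B k l * C l j) := mul_assoc _ _ _
    _ ≤ A i k * mProd B C k j := mul_le_mul_right (le_mProd _ _ _ _ _) _
    _ ≤ _ := le_mProd _ _ _ _ _
  · refine mProd_le fun k => ?_
    rw [mProd_apply, mul_finset_sup]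
    refine Finset.sup_le fun l _ => ?_
    calc A i k * (B k l * C l j) = A i k * B k l * C l j := (mul_assoc _ _ _).symm
    _ ≤ mProd A B i l * C l j := mul_le_mul_left (le_mProd _ _ _ _ _) _
    _ ≤ _ := le_mProd _ _ _ _ _

lemma mProd_one (A : Matrix m m NNReal) : mProd A 1 = A := by
  funext i j
  apply le_antisymm
  · refine mProd_le fun k => ?_
    by_cases h : k = j
    · subst h; simp [Matrix.one_apply]
    · simp [Matrix.one_apply, h]
  · simpa [Matrix.one_apply] using le_mProd A 1 i j j

lemma one_mProd (A : Matrix m m NNReal) : mProd 1 A = A := by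
  funext i j
  apply le_antisymm
  · refine mProd_le fun k => ?_
    by_cases h : i = k
    · subst h; simp [Matrix.one_apply]
    · simp [Matrix.one_apply, h]
  · simpa [Matrix.one_apply] using le_mProd 1 A i j i

lemma mPow_zero (A : Matrix m m NNReal) : mPow A 0 = 1 := rfl
lemma mPow_succ (A : Matrix m m NNReal) (k : ℕ) : mPow A (k + 1) = mProd A (mPow A k) := rfl
lemma mPow_one (A : Matrix m m NNReal) : mPow A 1 = A := by
  rw [mPow_succ, mPow_zero, mProd_one]

lemma mPow_succ' (A : Matrix m m NNReal) (k : ℕ) :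
    mPow A (k + 1) = mProd (mPow A k) A := by
  induction k with
  | zero => rw [mPow_succ, mPow_zero, mProd_one, one_mProd]
  | succ k ih =>
      calc mPow A (k + 1 + 1) = mProd A (mProd (mPow A k) A) := by rw [mPow_succ, ih]
      _ = mProd (mProd A (mPow A k)) A := (mProd_assoc _ _ _).symm
      _ = mProd (mPow A (k + 1)) A := rfl

lemma mPow_add (A : Matrix m m NNReal) (a b : ℕ) :
    mPow A (a + b) = mProd (mPow A a) (mPow A b) := by
  induction b with
  | zero => rw [Nat.add_zero, mPow_zero, mProd_one]
  | succ b ih =>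
      rw [← Nat.add_assoc, mPow_succ' _ (a+b), ih, mProd_assoc, ← mPow_succ']

lemma commute_mPow {A B : Matrix m m NNReal} (h : mProd A B = mProd B A) (k : ℕ) :
    mProd A (mPow B k) = mProd (mPow B k) A := by
  induction k with
  | zero => rw [mPow_zero, mProd_one, one_mProd]
  | succ k ih =>
      rw [mPow_succ, ← mProd_assoc, h, mProd_assoc, ih, ← mProd_assoc, ← mPow_succ]

lemma commute_mPow_mPow {A B : Matrix m m NNReal} (h : mProd A B = mProd B A) (k l : ℕ) :
    mProd (mPow A k) (mPow B l) = mProd (mPow B l) (mPow A k) := by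
  induction k with
  | zero => rw [mPow_zero, mProd_one, one_mProd]
  | succ k ih =>
      rw [mPow_succ, mProd_assoc, ih, ← mProd_assoc, commute_mPow h, mProd_assoc, ← mPow_succ]

lemma mPow_mProd_comm {A B : Matrix m m NNReal} (h : mProd A B = mProd B A) (k : ℕ) :
    mPow (mProd A B) k = mProd (mPow A k) (mPow B k) := by
  induction k with
  | zero => rw [mPow_zero, mPow_zero, mPow_zero, mProd_one]
  | succ k ih =>
      have hBA : mProd B (mPow A k) = mProd (mPow A k) B := commute_mPow h.symm k
      calc mPow (mProd A B) (k + 1) = mProd (mProd A B) (mProd (mPow A k) (mPow B k)) := by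
            rw [mPow_succ, ih]
      _ = mProd A (mProd B (mProd (mPow A k) (mPow B k))) := mProd_assoc _ _ _
      _ = mProd A (mProd (mProd B (mPow A k)) (mPow B k)) := by rw [mProd_assoc]
      _ = mProd A (mProd (mProd (mPow A k) B) (mPow B k)) := by rw [hBA]
      _ = mProd A (mProd (mPow A k) (mProd B (mPow B k))) := by rw [mProd_assoc]
      _ = mProd (mProd A (mPow A k)) (mProd B (mPow B k)) := (mProd_assoc _ _ _).symm
      _ = mProd (mPow A (k + 1)) (mPow B (k + 1)) := rfl

lemma mPow_mPow (A : Matrix m m NNReal) (a b : ℕ) :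
    mPow (mPow A a) b = mPow A (a * b) := by
  induction b with
  | zero => rw [Nat.mul_zero, mPow_zero, mPow_zero]
  | succ b ih => rw [mPow_succ, ih, Nat.mul_succ, Nat.add_comm, mPow_add]

lemma mPow_mono {A B : Matrix m m NNReal} (h : ∀ i j, A i j ≤ B i j) (k : ℕ) :
    ∀ i j, mPow A k i j ≤ mPow B k i j := by
  induction k with
  | zero => intro i j; exact le_rfl
  | succ k ih =>
      intro i j
      refine mProd_le fun l => le_trans (mul_le_mul' (h i l) (ih l j)) (le_mProd _ _ _ _ _)

end base

section topo
set_option linter.unusedSectionVars false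
variable {m : Type*} [Fintype m] [DecidableEq m] {α : Type*} {l : Filter α}

lemma tendsto_finset_sup {ι : Type*} (s : Finset ι) {f : α → ι → NNReal} {g : ι → NNReal}
    (h : ∀ i ∈ s, Tendsto (fun k => f k i) l (nhds (g i))) :
    Tendsto (fun k => s.sup (f k)) l (nhds (s.sup g)) := by
  classical
  induction s using Finset.induction with
  | empty => simpa using tendsto_const_nhds
  | @insert a s ha ih =>
      simp only [Finset.sup_insert]
      exact (h a (Finset.mem_insert_self a s)).max
        (ih fun i hi => h i (Finset.mem_insert_of_mem hi))

lemma tendsto_entries {X : α → Matrix m m NNReal} {P : Matrix m m NNReal}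
    (h : Tendsto X l (nhds P)) (i j : m) :
    Tendsto (fun k => X k i j) l (nhds (P i j)) :=
  tendsto_pi_nhds.1 (tendsto_pi_nhds.1 h i) j

lemma tendsto_of_entries {X : α → Matrix m m NNReal} {P : Matrix m m NNReal}
    (h : ∀ i j, Tendsto (fun k => X k i j) l (nhds (P i j))) :
    Tendsto X l (nhds P) :=
  tendsto_pi_nhds.2 fun i => tendsto_pi_nhds.2 fun j => h i j

lemma Filter.Tendsto.mProd {X Y : α → Matrix m m NNReal} {P Q : Matrix m m NNReal}
    (hX : Tendsto X l (nhds P)) (hY : Tendsto Y l (nhds Q)) :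
    Tendsto (fun k => mProd (X k) (Y k)) l (nhds (mProd P Q)) := by
  refine tendsto_of_entries fun i j => ?_
  exact tendsto_finset_sup _ fun c _ => (tendsto_entries hX i c).mul (tendsto_entries hY c j)

lemma Filter.Tendsto.mPow {X : α → Matrix m m NNReal} {P : Matrix m m NNReal}
    (hX : Tendsto X l (nhds P)) (c : ℕ) :
    Tendsto (fun k => mPow (X k) c) l (nhds (mPow P c)) := by
  induction c with
  | zero => simpa [mPow_zero] using tendsto_const_nhds
  | succ c ih => exact hX.mProd ih

lemma tendsto_seqProd {N : ℕ} {M : α → Fin N → Matrix m m NNReal} {M' : Fin N → Matrix m m NNReal}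
    (h : ∀ i, Tendsto (fun k => M k i) l (nhds (M' i))) :
    Tendsto (fun k => seqProd (M k)) l (nhds (seqProd M')) := by
  induction N with
  | zero => simpa [seqProd] using tendsto_const_nhds
  | succ N ih =>
      show Tendsto (fun k => mProd (M k 0) (seqProd fun i => M k i.succ)) l _
      exact (h 0).mProd (ih fun i => h i.succ)

end topo

section walk
set_option linter.unusedSectionVars false
variable {n : ℕ}

/-- endpoint of the walk starting at `u` through the vertex list `l`. -/
def ep : Fin n → List (Fin n) → Fin n
  | u, [] => u
  | _, z :: t => ep z t

/-- weight of the walk starting at `u` through the vertex list `l`. -/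
noncomputable def wt (A : Matrix (Fin n) (Fin n) NNReal) : Fin n → List (Fin n) → NNReal
  | _, [] => 1
  | u, z :: t => A u z * wt A z t

variable (A : Matrix (Fin n) (Fin n) NNReal)

lemma ep_append (u : Fin n) (s t : List (Fin n)) : ep u (s ++ t) = ep (ep u s) t := by
  induction s generalizing u with
  | nil => rfl
  | cons z s ih => exact ih z

lemma wt_append (u : Fin n) (s t : List (Fin n)) :
    wt A u (s ++ t) = wt A u s * wt A (ep u s) t := by
  induction s generalizing u with
  | nil => simp [wt, ep]
  | cons z s ih =>
      show A u z * wt A z (s ++ t) = A u z * wt A z s * wt A (ep z s) t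
      rw [ih z, mul_assoc]

lemma wt_le_mPow (u : Fin n) (l : List (Fin n)) :
    wt A u l ≤ mPow A l.length u (ep u l) := by
  induction l generalizing u with
  | nil => simp [wt, ep, mPow_zero, Matrix.one_apply]
  | cons z t ih =>
      show A u z * wt A z t ≤ mPow A (t.length + 1) u (ep z t)
      rw [mPow_succ]
      exact le_trans (mul_le_mul_right (ih z) _) (le_mProd _ _ _ _ _)

/-- walk representation of max-times powers -/
lemma mPow_eq_sup_walks (k : ℕ) (u v : Fin n) :
    mPow A k u v = Finset.univ.sup fun f : Fin k → Fin n =>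
      if ep u (List.ofFn f) = v then wt A u (List.ofFn f) else 0 := by
  induction k generalizing u with
  | zero =>
      rw [Finset.univ_unique, Finset.sup_singleton]
      simp [mPow_zero, Matrix.one_apply, List.ofFn_zero, ep, wt]
  | succ k ih =>
      have he : Finset.univ.image (⇑(Fin.consEquiv fun _ : Fin (k+1) => Fin n)) = Finset.univ :=
        Finset.image_univ_of_surjective (Fin.consEquiv _).surjective
      rw [mPow_succ]
      show (Finset.univ.sup fun z => A u z * mPow A k z v) = _
      rw [← he, Finset.sup_image, ← Finset.univ_product_univ, Finset.sup_product_left]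
      refine Finset.sup_congr rfl fun z _ => ?_
      rw [ih z, mul_finset_sup]
      refine Finset.sup_congr rfl fun f _ => ?_
      have hofn : List.ofFn ((Fin.consEquiv fun _ : Fin (k+1) => Fin n) (z, f)) =
          z :: List.ofFn f := by
        simp [List.ofFn_succ, Fin.consEquiv]
      rw [Function.comp_apply, hofn]
      show A u z * (if ep z (List.ofFn f) = v then wt A z (List.ofFn f) else 0) =
        (if ep z (List.ofFn f) = v then wt A u (z :: List.ofFn f) else 0)
      rw [mul_ite, mul_zero]
      rfl

lemma mPow_le_of_walks {k : ℕ} {u v : Fin n} {C : NNReal}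
    (h : ∀ l : List (Fin n), l.length = k → ep u l = v → wt A u l ≤ C) :
    mPow A k u v ≤ C := by
  rw [mPow_eq_sup_walks]
  refine Finset.sup_le fun f _ => ?_
  split
  · exact h _ (by simp) ‹_›
  · exact (zero_le)

lemma wt_le_mPow' {k : ℕ} {u v : Fin n} {l : List (Fin n)}
    (hl : l.length = k) (hv : ep u l = v) : wt A u l ≤ mPow A k u v := by
  subst hl; subst hv; exact wt_le_mPow A u l

/-- pigeonhole: a long walk contains a short closed subwalk -/
lemma exists_split (l : List (Fin n)) (u : Fin n) (hl : n < l.length) :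
    ∃ l₁ l₂ l₃ : List (Fin n), l = l₁ ++ (l₂ ++ l₃) ∧ l₂ ≠ [] ∧ l₂.length ≤ n ∧
      ep (ep u l₁) l₂ = ep u l₁ := by
  have hcard : Fintype.card (Fin n) < Fintype.card (Fin (n + 1)) := by simp
  obtain ⟨i, j, hij, hg⟩ := Fintype.exists_ne_map_eq_of_card_lt
    (fun i : Fin (n + 1) => ep u (l.take i)) hcard
  -- wlog i < j
  rcases hij.lt_or_gt with hlt | hlt
  case' inr => rename' i => j', j => i; rename' j' => j; rw [eq_comm] at hg
  all_goals {
    have hij' : (i : ℕ) ≤ (j : ℕ) := le_of_lt (Fin.lt_def.mp hlt)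
    refine ⟨l.take i, (l.take j).drop i, l.drop j, ?_, ?_, ?_, ?_⟩
    · rw [← List.append_assoc]
      have : l.take i = (l.take j).take i := by rw [List.take_take, min_eq_left hij']
      rw [this, List.take_append_drop, List.take_append_drop]
    · have hjlen : (l.take j).length = j := by
        rw [List.length_take]; exact min_eq_left (le_trans (Nat.le_of_lt_succ j.2) hl.le)
      have : ((l.take j).drop i).length = j - i := by rw [List.length_drop, hjlen]
      intro hemp
      rw [hemp] at this
      simp only [List.length_nil] at this
      omega
    · have hjlen : (l.take j).length = j := by
        rw [List.length_take]; exact min_eq_left (le_trans (Nat.le_of_lt_succ j.2) hl.le)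
      rw [List.length_drop, hjlen]
      omega
    · have : l.take i ++ (l.take j).drop i = l.take j := by
        have h1 : l.take i = (l.take j).take i := by rw [List.take_take, min_eq_left hij']
        rw [h1, List.take_append_drop]
      rw [← ep_append, this, hg] }

lemma diag_le_pow_mu {ℓ : ℕ} (h1 : 1 ≤ ℓ) (h2 : ℓ ≤ n) (z : Fin n) :
    mPow A ℓ z z ≤ (mu A) ^ ℓ := by
  have hmem : ℓ ∈ Finset.Icc 1 (Fintype.card (Fin n)) := by
    simp only [Finset.mem_Icc, Fintype.card_fin]; exact ⟨h1, h2⟩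
  have hle : (mPow A ℓ z z) ^ ((ℓ : ℝ)⁻¹) ≤ mu A :=
    le_trans (Finset.le_sup (f := fun i => (mPow A ℓ i i) ^ ((ℓ : ℝ)⁻¹)) (Finset.mem_univ z))
      (Finset.le_sup (f := fun ℓ => Finset.univ.sup fun i => (mPow A ℓ i i) ^ ((ℓ : ℝ)⁻¹)) hmem)
  have hℓ : ((ℓ : ℝ)⁻¹ * (ℓ : ℝ)) = 1 := by
    rw [inv_mul_cancel₀]; exact_mod_cast Nat.one_le_iff_ne_zero.mp h1
  calc mPow A ℓ z z = (mPow A ℓ z z) ^ ((ℓ : ℝ)⁻¹ * (ℓ : ℝ)) := by rw [hℓ, NNReal.rpow_one]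
  _ = ((mPow A ℓ z z) ^ ((ℓ : ℝ)⁻¹)) ^ (ℓ : ℝ) := NNReal.rpow_mul _ _ _
  _ ≤ (mu A) ^ (ℓ : ℝ) := NNReal.rpow_le_rpow hle (Nat.cast_nonneg ℓ)
  _ = (mu A) ^ ℓ := NNReal.rpow_natCast _ _

lemma cwb_small {l : List (Fin n)} {z : Fin n} (hne : l ≠ []) (hlen : l.length ≤ n)
    (hcl : ep z l = z) : wt A z l ≤ (mu A) ^ l.length := by
  refine le_trans (wt_le_mPow' A rfl hcl) (diag_le_pow_mu A ?_ hlen z)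
  exact Nat.one_le_iff_ne_zero.2 (fun h => hne (List.length_eq_zero_iff.1 h))

/-- closed-walk bound -/
lemma cwb : ∀ (k : ℕ) (l : List (Fin n)) (z : Fin n), l.length = k → l ≠ [] →
    ep z l = z → wt A z l ≤ (mu A) ^ k := by
  intro k
  induction k using Nat.strong_induction_on with
  | _ k ih =>
    intro l z hk hne hcl
    by_cases hn : l.length ≤ n
    · rw [← hk]; exact cwb_small A hne hn hcl
    · obtain ⟨l₁, l₂, l₃, hsplit, hne₂, hlen₂, hcl₂⟩ := exists_split l z (not_le.1 hn)
      set w := ep z l₁ with hw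
      have hepl : ep z l = ep w l₃ := by
        rw [hsplit, ep_append, ep_append, ← hw, hcl₂]
      have hwt : wt A z l = wt A w l₂ * wt A z (l₁ ++ l₃) := by
        rw [hsplit, wt_append, wt_append, ← hw, wt_append, ← hw, hcl₂]
        ring
      have hL : l.length = l₁.length + (l₂.length + l₃.length) := by
        rw [hsplit]; simp [List.length_append]
      have hL2 : (l₁ ++ l₃).length = l₁.length + l₃.length := List.length_append
      have hpos : 0 < l₂.length := List.length_pos_iff.2 hne₂
      have hlness : (l₁ ++ l₃).length < k := by omega
      have hcl' : ep z (l₁ ++ l₃) = z := by rw [ep_append, ← hw, ← hepl, hcl]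
      have hne' : l₁ ++ l₃ ≠ [] := by
        intro h
        have h0 := congrArg List.length h
        simp only [List.length_nil] at h0
        rw [hL2] at h0
        omega
      have h1 : wt A w l₂ ≤ (mu A) ^ l₂.length := cwb_small A hne₂ hlen₂ hcl₂
      have h2 : wt A z (l₁ ++ l₃) ≤ (mu A) ^ (l₁ ++ l₃).length :=
        ih _ hlness _ _ rfl hne' hcl'
      calc wt A z l ≤ (mu A) ^ l₂.length * (mu A) ^ (l₁ ++ l₃).length := by
            rw [hwt]; exact mul_le_mul' h1 h2
      _ = (mu A) ^ (l₂.length + (l₁ ++ l₃).length) := (pow_add _ _ _).symm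
      _ = (mu A) ^ k := by
            congr 1
            omega

end walk

section bounds
set_option linter.unusedSectionVars false
variable {n : ℕ} (A : Matrix (Fin n) (Fin n) NNReal)

/-- entrywise bound -/
noncomputable def Bnd : NNReal :=
  1 ⊔ Finset.univ.sup fun p : Fin n × Fin n => A p.1 p.2

lemma one_le_Bnd : 1 ≤ Bnd A := le_sup_left

lemma entry_le_Bnd (u z : Fin n) : A u z ≤ Bnd A :=
  le_trans (Finset.le_sup (f := fun p : Fin n × Fin n => A p.1 p.2) (Finset.mem_univ (u, z)))
    le_sup_right

lemma wt_le_pow (u : Fin n) (l : List (Fin n)) : wt A u l ≤ Bnd A ^ l.length := by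
  induction l generalizing u with
  | nil => simp [wt]
  | cons z t ih =>
      show A u z * wt A z t ≤ Bnd A ^ (t.length + 1)
      rw [pow_succ, mul_comm (Bnd A ^ t.length)]
      exact mul_le_mul' (entry_le_Bnd A u z) (ih z)

lemma wt_le_geom (hmu : mu A ≤ 1) :
    ∀ (k : ℕ) (l : List (Fin n)) (u : Fin n), l.length = k →
      wt A u l ≤ Bnd A ^ n * (mu A) ^ (k - n) := by
  intro k
  induction k using Nat.strong_induction_on with
  | _ k ih =>
    intro l u hk
    by_cases hn : l.length ≤ n
    · have h1 : wt A u l ≤ Bnd A ^ n := le_trans (wt_le_pow A u l)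
        (pow_le_pow_right' (one_le_Bnd A) hn)
      have h2 : k - n = 0 := by omega
      rw [h2, pow_zero, mul_one]
      exact h1
    · obtain ⟨l₁, l₂, l₃, hsplit, hne₂, hlen₂, hcl₂⟩ := exists_split l u (not_le.1 hn)
      set w := ep u l₁ with hw
      have hwt : wt A u l = wt A w l₂ * wt A u (l₁ ++ l₃) := by
        rw [hsplit, wt_append, wt_append, ← hw, wt_append, ← hw, hcl₂]
        ring
      have hL : l.length = l₁.length + (l₂.length + l₃.length) := by
        rw [hsplit]; simp [List.length_append]
      have hL2 : (l₁ ++ l₃).length = l₁.length + l₃.length := List.length_append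
      have hpos : 0 < l₂.length := List.length_pos_iff.2 hne₂
      have hlt : (l₁ ++ l₃).length < k := by omega
      have h1 : wt A w l₂ ≤ (mu A) ^ l₂.length := cwb_small A hne₂ hlen₂ hcl₂
      have h2 : wt A u (l₁ ++ l₃) ≤ Bnd A ^ n * (mu A) ^ ((l₁ ++ l₃).length - n) :=
        ih _ hlt _ _ rfl
      have hexp : (mu A) ^ l₂.length * (mu A) ^ ((l₁ ++ l₃).length - n) ≤ (mu A) ^ (k - n) := by
        rw [← pow_add]
        refine pow_le_pow_of_le_one ((zero_le)) hmu ?_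
        omega
      calc wt A u l ≤ (mu A) ^ l₂.length * (Bnd A ^ n * (mu A) ^ ((l₁ ++ l₃).length - n)) := by
            rw [hwt]; exact mul_le_mul' h1 h2
      _ = Bnd A ^ n * ((mu A) ^ l₂.length * (mu A) ^ ((l₁ ++ l₃).length - n)) := by ring
      _ ≤ Bnd A ^ n * (mu A) ^ (k - n) := mul_le_mul_right hexp _

lemma mPow_le_geom (hmu : mu A ≤ 1) (k : ℕ) (u v : Fin n) :
    mPow A k u v ≤ Bnd A ^ n * (mu A) ^ (k - n) :=
  mPow_le_of_walks A fun l hl _ => wt_le_geom A hmu k l u hl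

lemma mPow_le_bound (hmu : mu A ≤ 1) (k : ℕ) (u v : Fin n) :
    mPow A k u v ≤ Bnd A ^ n :=
  le_trans (mPow_le_geom A hmu k u v)
    (by simpa using mul_le_mul_right (pow_le_one' hmu _) (Bnd A ^ n))

lemma diag_le_one (hmu : mu A ≤ 1) {k : ℕ} (hk : 1 ≤ k) (z : Fin n) :
    mPow A k z z ≤ 1 := by
  refine mPow_le_of_walks A fun l hl hv => ?_
  have hne : l ≠ [] := by
    intro h; rw [h] at hl; simp at hl; omega
  exact le_trans (cwb A k l z hl hne hv) (pow_le_one' hmu _)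

lemma diag_pow_le (z : Fin n) (ℓ t : ℕ) :
    (mPow A ℓ z z) ^ t ≤ mPow A (ℓ * t) z z := by
  induction t with
  | zero => simp [mPow_zero, Matrix.one_apply]
  | succ t ih =>
      rw [pow_succ, Nat.mul_succ, mPow_add]
      exact le_trans (mul_le_mul' ih le_rfl) (le_mProd _ _ _ _ _)

lemma mu_mono {B : Matrix (Fin n) (Fin n) NNReal} (h : ∀ i j, A i j ≤ B i j) :
    mu A ≤ mu B := by
  refine Finset.sup_mono_fun fun ℓ _ => Finset.sup_mono_fun fun z _ => ?_
  exact NNReal.rpow_le_rpow (mPow_mono h ℓ z z) (by positivity)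

end bounds

section mainlemma
set_option linter.unusedSectionVars false
open Finset
variable {n : ℕ} (A : Matrix (Fin n) (Fin n) NNReal)

/-- critical vertices -/
noncomputable def critSet : Finset (Fin n) := by
  classical exact Finset.univ.filter fun z => mPow A n.factorial z z = 1

lemma mem_critSet {z : Fin n} (hz : z ∈ critSet A) : mPow A n.factorial z z = 1 := by
  classical
  unfold critSet at hz
  simp only [Finset.mem_filter] at hz
  exact hz.2

lemma mem_critSet_of {z : Fin n} (hz : mPow A n.factorial z z = 1) : z ∈ critSet A := by
  classical
  unfold critSet
  simp only [Finset.mem_filter]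
  exact ⟨Finset.mem_univ z, hz⟩

/-- the submatrix obtained by deleting rows and columns of critical vertices -/
noncomputable def Asub : Matrix (Fin n) (Fin n) NNReal := by
  classical exact fun z w => if z ∈ critSet A ∨ w ∈ critSet A then 0 else A z w

lemma Asub_le (z w : Fin n) : Asub A z w ≤ A z w := by
  classical
  unfold Asub
  split <;> simp

lemma Asub_row_zero {z : Fin n} (hz : z ∈ critSet A) (w : Fin n) : Asub A z w = 0 := by
  classical
  unfold Asub
  rw [if_pos (Or.inl hz)]

lemma Asub_eq_of_not {z w : Fin n} (hz : z ∉ critSet A) (hw : w ∉ critSet A) :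
    Asub A z w = A z w := by
  classical
  unfold Asub
  rw [if_neg (by tauto)]

lemma mPow_Asub_row_zero {z : Fin n} (hz : z ∈ critSet A) {k : ℕ} (hk : 1 ≤ k) (v : Fin n) :
    mPow (Asub A) k z v = 0 := by
  obtain ⟨k', rfl⟩ : ∃ k', k = k' + 1 := ⟨k - 1, by omega⟩
  rw [mPow_succ]
  refine le_antisymm (mProd_le fun w => ?_) ((zero_le))
  rw [Asub_row_zero A hz, zero_mul]

lemma mu_def : mu A = (Finset.Icc 1 (Fintype.card (Fin n))).sup fun ℓ =>
    Finset.univ.sup fun i => (mPow A ℓ i i) ^ ((ℓ : ℝ)⁻¹) := rfl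

lemma mu_Asub_lt_one (hmu : mu A ≤ 1) : mu (Asub A) < 1 := by
  classical
  rcases lt_or_eq_of_le (le_trans (mu_mono (Asub A) (Asub_le A)) hmu) with h | h
  · exact h
  · exfalso
    rcases Nat.eq_zero_or_pos n with rfl | hn
    · have h0 : mu (Asub A) = 0 := by
        rw [mu_def]
        have : Finset.Icc 1 (Fintype.card (Fin 0)) = ∅ := by
          rw [Fintype.card_fin]; rfl
        rw [this, Finset.sup_empty]; rfl
      rw [h0] at h; exact one_ne_zero h.symm
    have hne : (Finset.Icc 1 (Fintype.card (Fin n))).Nonempty := by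
      refine ⟨1, ?_⟩
      rw [Finset.mem_Icc, Fintype.card_fin]
      omega
    rw [mu_def] at h
    obtain ⟨ℓ, hℓmem, hℓ⟩ := Finset.exists_mem_eq_sup _ hne
      (fun ℓ => Finset.univ.sup fun i => (mPow (Asub A) ℓ i i) ^ ((ℓ : ℝ)⁻¹))
    rw [Finset.mem_Icc, Fintype.card_fin] at hℓmem
    have : Nonempty (Fin n) := ⟨⟨0, hn⟩⟩
    obtain ⟨z, _, hz⟩ := Finset.exists_mem_eq_sup _ Finset.univ_nonempty
      (fun i => (mPow (Asub A) ℓ i i) ^ ((ℓ : ℝ)⁻¹))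
    have hval : (mPow (Asub A) ℓ z z) ^ ((ℓ : ℝ)⁻¹) = 1 := by
      rw [← hz, ← hℓ]; exact h
    have hμ1 : mu (Asub A) = 1 := by rw [mu_def]; exact h
    have hd1 : mPow (Asub A) ℓ z z = 1 := by
      refine le_antisymm ?_ ?_
      · calc mPow (Asub A) ℓ z z ≤ (mu (Asub A)) ^ ℓ :=
              diag_le_pow_mu (Asub A) hℓmem.1 hℓmem.2 z
        _ = 1 := by rw [hμ1, one_pow]
      · by_contra hlt
        have hlt' : mPow (Asub A) ℓ z z < 1 := not_le.1 hlt
        have hpos : (0 : ℝ) < (ℓ : ℝ)⁻¹ := by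
          have : (0 : ℝ) < (ℓ : ℝ) := by exact_mod_cast hℓmem.1
          positivity
        have : (mPow (Asub A) ℓ z z) ^ ((ℓ : ℝ)⁻¹) < 1 := NNReal.rpow_lt_one hlt' hpos
        rw [hval] at this; exact lt_irrefl _ this
    have hzA : 1 ≤ mPow A ℓ z z := by
      rw [← hd1]; exact mPow_mono (Asub_le A) ℓ z z
    obtain ⟨t, ht⟩ : ℓ ∣ n.factorial := Nat.dvd_factorial (by omega) hℓmem.2
    have hcrit : z ∈ critSet A := by
      refine mem_critSet_of A (le_antisymm (diag_le_one A hmu (Nat.factorial_pos n) z) ?_)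
      calc (1 : NNReal) = 1 ^ t := (one_pow t).symm
      _ ≤ (mPow A ℓ z z) ^ t := pow_le_pow_left' hzA t
      _ ≤ mPow A (ℓ * t) z z := diag_pow_le A z ℓ t
      _ = mPow A n.factorial z z := by rw [← ht]
    have h0 : mPow (Asub A) ℓ z z = 0 := mPow_Asub_row_zero A hcrit hℓmem.1 z
    rw [h0] at hd1; exact zero_ne_one hd1

/-- the auxiliary monotone sequence -/
noncomputable def bseq (k : ℕ) (u v : Fin n) : NNReal :=
  Finset.sup (Finset.univ ×ˢ Finset.range (k+1) ×ˢ Finset.range (k+1))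
    fun zms : Fin n × ℕ × ℕ =>
      if zms.1 ∈ critSet A ∧ zms.2.1 + zms.2.2 ≤ k ∧
          (k - (zms.2.1 + zms.2.2)) % n.factorial = 0 then
        mPow A zms.2.1 u zms.1 * mPow A zms.2.2 zms.1 v
      else 0

lemma bseq_def (k : ℕ) (u v : Fin n) : bseq A k u v =
    Finset.sup (Finset.univ ×ˢ Finset.range (k+1) ×ˢ Finset.range (k+1))
    (fun zms : Fin n × ℕ × ℕ =>
      if zms.1 ∈ critSet A ∧ zms.2.1 + zms.2.2 ≤ k ∧
          (k - (zms.2.1 + zms.2.2)) % n.factorial = 0 then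
        mPow A zms.2.1 u zms.1 * mPow A zms.2.2 zms.1 v
      else 0) := rfl

lemma le_bseq {k m₁ m₂ : ℕ} {z u v : Fin n} (hz : z ∈ critSet A)
    (hle : m₁ + m₂ ≤ k) (hmod : (k - (m₁ + m₂)) % n.factorial = 0) :
    mPow A m₁ u z * mPow A m₂ z v ≤ bseq A k u v := by
  rw [bseq_def]
  have hmem : ((z, m₁, m₂) : Fin n × ℕ × ℕ) ∈
      Finset.univ ×ˢ Finset.range (k+1) ×ˢ Finset.range (k+1) := by
    simp only [Finset.mem_product, Finset.mem_range, Finset.mem_univ, true_and]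
    omega
  refine le_trans (le_of_eq ?_) (Finset.le_sup hmem)
  exact (if_pos ⟨hz, hle, hmod⟩).symm

lemma bseq_le {k : ℕ} {u v : Fin n} {C : NNReal}
    (h : ∀ (z : Fin n) (m₁ m₂ : ℕ), z ∈ critSet A → m₁ + m₂ ≤ k →
      (k - (m₁ + m₂)) % n.factorial = 0 → mPow A m₁ u z * mPow A m₂ z v ≤ C) :
    bseq A k u v ≤ C := by
  rw [bseq_def]
  refine Finset.sup_le fun zms _ => ?_
  obtain ⟨z, m₁, m₂⟩ := zms
  split
  case isTrue hcond =>
    obtain ⟨hz, hle, hmod⟩ := hcond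
    simp only at hz hle hmod
    exact h z m₁ m₂ hz hle hmod
  case isFalse => exact (zero_le)

lemma bseq_le_mPow (k : ℕ) (u v : Fin n) : bseq A k u v ≤ mPow A k u v := by
  refine bseq_le A fun z m₁ m₂ hz hle hmod => ?_
  obtain ⟨t, ht⟩ : n.factorial ∣ (k - (m₁ + m₂)) := Nat.dvd_of_mod_eq_zero hmod
  have hzdiag : mPow A n.factorial z z = 1 := mem_critSet A hz
  have hk : k = m₁ + (n.factorial * t + m₂) := by omega
  rw [hk, mPow_add, mPow_add]
  calc mPow A m₁ u z * mPow A m₂ z v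
      = mPow A m₁ u z * (1 * mPow A m₂ z v) := by rw [one_mul]
  _ ≤ mPow A m₁ u z * (mPow A (n.factorial * t) z z * mPow A m₂ z v) := by
      refine mul_le_mul_right (mul_le_mul_left ?_ _) _
      calc (1:NNReal) = 1 ^ t := (one_pow t).symm
      _ = (mPow A n.factorial z z) ^ t := by rw [hzdiag]
      _ ≤ mPow A (n.factorial * t) z z := diag_pow_le A z _ t
  _ ≤ mPow A m₁ u z * mProd (mPow A (n.factorial * t)) (mPow A m₂) z v :=
      mul_le_mul_right (le_mProd _ _ _ _ _) _
  _ ≤ _ := le_mProd _ _ _ _ _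

lemma bseq_mono (k : ℕ) (u v : Fin n) : bseq A k u v ≤ bseq A (k + n.factorial) u v := by
  refine bseq_le A fun z m₁ m₂ hz hle hmod => ?_
  refine le_bseq A hz (by omega) ?_
  have he : k + n.factorial - (m₁ + m₂) = (k - (m₁ + m₂)) + n.factorial := by omega
  rw [he, Nat.add_mod_right]
  exact hmod

lemma bseq_le_bound (hmu : mu A ≤ 1) (k : ℕ) (u v : Fin n) :
    bseq A k u v ≤ Bnd A ^ n * Bnd A ^ n := by
  refine bseq_le A fun z m₁ m₂ _ _ _ => ?_
  exact mul_le_mul' (mPow_le_bound A hmu _ _ _) (mPow_le_bound A hmu _ _ _)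

lemma mPow_le_bseq_sup (k : ℕ) (u v : Fin n) :
    mPow A k u v ≤ bseq A k u v ⊔ mPow (Asub A) k u v := by
  classical
  induction k generalizing u with
  | zero => exact le_sup_right
  | succ k ih =>
      by_cases hu : u ∈ critSet A
      · refine le_trans ?_ le_sup_left
        have := le_bseq A (k := k+1) (m₁ := 0) (m₂ := k+1) (u := u) (v := v) hu
          (by omega) (by simp)
        simpa only [mPow_zero, Matrix.one_apply_eq, one_mul] using this
      · rw [mPow_succ]
        refine mProd_le fun z => ?_
        refine le_trans (mul_le_mul_right (ih z) _) ?_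
        rw [nn_mul_sup]
        refine sup_le ?_ ?_
        · -- A u z * bseq A k z v ≤ bseq A (k+1) u v
          refine le_trans ?_ le_sup_left
          rw [bseq_def A k, mul_finset_sup]
          refine Finset.sup_le fun zms _ => ?_
          obtain ⟨y, m₁, m₂⟩ := zms
          split
          next hcond =>
            obtain ⟨hy, hle, hmod⟩ := hcond
            simp only at hy hle hmod
            have hmod' : (k + 1 - (m₁ + 1 + m₂)) % n.factorial = 0 := by
              have : k + 1 - (m₁ + 1 + m₂) = k - (m₁ + m₂) := by omega
              rw [this]; exact hmod
            refine le_trans (le_of_eq (mul_assoc _ _ _).symm) ?_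
            refine le_trans ?_ (le_bseq A (m₁ := m₁ + 1) (m₂ := m₂) hy (by omega) hmod')
            refine mul_le_mul_left ?_ _
            rw [mPow_succ]
            exact le_mProd _ _ _ _ _
          next => simp
        · -- A u z * mPow (Asub A) k z v
          by_cases hz : z ∈ critSet A
          · rcases Nat.eq_zero_or_pos k with rfl | hk
            · rw [mPow_zero, Matrix.one_apply]
              by_cases hzv : z = v
              · subst hzv
                rw [if_pos rfl, mul_one]
                refine le_trans ?_ le_sup_left
                have := le_bseq A (k := 1) (m₁ := 1) (m₂ := 0) (u := u) (v := z) hz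
                  (by omega) (by simp)
                simpa only [mPow_zero, Matrix.one_apply_eq, mul_one, mPow_one] using this
              · rw [if_neg hzv, mul_zero]
                exact (zero_le)
            · rw [mPow_Asub_row_zero A hz hk, mul_zero]
              exact (zero_le)
          · refine le_trans ?_ le_sup_right
            rw [← Asub_eq_of_not A hu hz, mPow_succ]
            exact le_mProd _ _ _ _ _

end mainlemma

section limits
set_option linter.unusedSectionVars false
variable {n : ℕ}

lemma exists_limits (A : Matrix (Fin n) (Fin n) NNReal) (hmu : mu A ≤ 1) (j : ℕ) :
    ∃ L, Tendsto (fun k => mPow A (k * n.factorial + j)) atTop (nhds L) := by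
  set q := n.factorial with hq
  refine ⟨fun u v => ⨆ k, bseq A (k * q + j) u v, tendsto_of_entries fun u v => ?_⟩
  set β : ℕ → NNReal := fun k => bseq A (k * q + j) u v with hβ
  have hmono : Monotone β := monotone_nat_of_le_succ fun k => by
    have h := bseq_mono A (k * q + j) u v
    have he : (k + 1) * q + j = (k * q + j) + q := by ring
    show bseq A (k * q + j) u v ≤ bseq A ((k + 1) * q + j) u v
    rw [he]
    exact h
  have hbdd : BddAbove (Set.range β) := ⟨Bnd A ^ n * Bnd A ^ n, by
    rintro x ⟨k, rfl⟩; exact bseq_le_bound A hmu _ u v⟩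
  have hβtend : Tendsto β atTop (nhds (⨆ k, β k)) := tendsto_atTop_ciSup hmono hbdd
  have hγ : mu (Asub A) < 1 := mu_Asub_lt_one A hmu
  have hdtend : Tendsto (fun k => Bnd (Asub A) ^ n * (mu (Asub A)) ^ ((k * q + j) - n))
      atTop (nhds (Bnd (Asub A) ^ n * 0)) := by
    refine Tendsto.const_mul _ ?_
    have h1 : Tendsto (fun t : ℕ => (mu (Asub A)) ^ t) atTop (nhds 0) :=
      NNReal.tendsto_pow_atTop_nhds_zero_of_lt_one hγ
    refine h1.comp ?_
    refine tendsto_atTop_atTop.2 fun b => ⟨b + n, fun k hk => ?_⟩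
    have hq1 : 1 ≤ q := Nat.factorial_pos n
    have : k ≤ k * q := Nat.le_mul_of_pos_right k (by omega)
    omega
  rw [mul_zero] at hdtend
  refine tendsto_of_tendsto_of_tendsto_of_le_of_le (g := β)
    (h := fun k => β k ⊔ Bnd (Asub A) ^ n * (mu (Asub A)) ^ ((k * q + j) - n))
    hβtend ?_ ?_ ?_
  · have h2 := hβtend.max hdtend
    have h0 : (⨆ k, β k) ⊔ 0 = ⨆ k, β k := sup_eq_left.2 ((zero_le))
    rw [h0] at h2
    exact h2
  · exact fun k => bseq_le_mPow A _ u v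
  · intro k
    refine le_trans (mPow_le_bseq_sup A _ u v) (sup_le_sup le_rfl ?_)
    exact le_trans (mPow_le_geom (Asub A) hγ.le _ u v) le_rfl

end limits

section word
set_option linter.unusedSectionVars false
variable {m : Type*} [Fintype m] [DecidableEq m]

lemma seqProd_succ {N : ℕ} (M : Fin (N+1) → Matrix m m NNReal) :
    seqProd M = mProd (M 0) (seqProd fun i => M i.succ) := rfl

lemma mPow_one_matrix (M : ℕ) : mPow (1 : Matrix m m NNReal) M = 1 := by
  induction M with
  | zero => rfl
  | succ M ih => rw [mPow_succ, ih, mProd_one]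

lemma seqProd_ones {N : ℕ} : seqProd (fun _ : Fin N => (1 : Matrix m m NNReal)) = 1 := by
  induction N with
  | zero => rfl
  | succ N ih =>
      show mProd 1 (seqProd fun _ : Fin N => (1 : Matrix m m NNReal)) = 1
      rw [ih, mProd_one]

lemma commute_seqProd {N : ℕ} {X : Matrix m m NNReal} {B : Fin N → Matrix m m NNReal}
    (h : ∀ i, mProd X (B i) = mProd (B i) X) :
    mProd X (seqProd B) = mProd (seqProd B) X := by
  induction N with
  | zero =>
      show mProd X 1 = mProd 1 X
      rw [mProd_one, one_mProd]
  | succ N ih =>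
      rw [seqProd_succ]
      calc mProd X (mProd (B 0) (seqProd fun i => B i.succ))
          = mProd (mProd X (B 0)) (seqProd fun i => B i.succ) := (mProd_assoc _ _ _).symm
      _ = mProd (mProd (B 0) X) (seqProd fun i => B i.succ) := by rw [h 0]
      _ = mProd (B 0) (mProd X (seqProd fun i => B i.succ)) := mProd_assoc _ _ _
      _ = mProd (B 0) (mProd (seqProd fun i => B i.succ) X) := by rw [ih fun i => h i.succ]
      _ = mProd (mProd (B 0) (seqProd fun i => B i.succ)) X := (mProd_assoc _ _ _).symm

lemma mPow_seqProd {N : ℕ} {B : Fin N → Matrix m m NNReal}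
    (h : ∀ i i', mProd (B i) (B i') = mProd (B i') (B i)) (M : ℕ) :
    mPow (seqProd B) M = seqProd fun i => mPow (B i) M := by
  induction N with
  | zero =>
      show mPow (1 : Matrix m m NNReal) M = 1
      exact mPow_one_matrix M
  | succ N ih =>
      have hc : mProd (B 0) (seqProd fun i => B i.succ) =
          mProd (seqProd fun i => B i.succ) (B 0) :=
        commute_seqProd fun i => h 0 i.succ
      rw [seqProd_succ, mPow_mProd_comm hc, ih fun i i' => h i.succ i'.succ]
      rfl

lemma seqProd_insert {N : ℕ} (B : Fin N → Matrix m m NNReal)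
    (h : ∀ i i', mProd (B i) (B i') = mProd (B i') (B i)) (t : Fin N) (c : Fin N → ℕ) :
    mProd (B t) (seqProd fun i => mPow (B i) (c i)) =
      seqProd fun i => mPow (B i) (c i + if t = i then 1 else 0) := by
  induction N with
  | zero => exact t.elim0
  | succ N ih =>
      induction t using Fin.cases with
      | zero =>
          have hz : (fun i : Fin N =>
              mPow (B i.succ) (c i.succ + if (0 : Fin (N+1)) = i.succ then 1 else 0)) =
              fun i : Fin N => mPow (B i.succ) (c i.succ) := by
            funext i
            rw [if_neg fun hh => (Fin.succ_ne_zero i) hh.symm, Nat.add_zero]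
          have hhead : mPow (B 0) (c 0 + if (0 : Fin (N+1)) = 0 then 1 else 0) =
              mProd (B 0) (mPow (B 0) (c 0)) := by
            rw [if_pos rfl]; rfl
          calc mProd (B 0) (seqProd fun i : Fin (N+1) => mPow (B i) (c i))
              = mProd (B 0) (mProd (mPow (B 0) (c 0))
                  (seqProd fun i : Fin N => mPow (B i.succ) (c i.succ))) := rfl
          _ = mProd (mProd (B 0) (mPow (B 0) (c 0)))
                  (seqProd fun i : Fin N => mPow (B i.succ) (c i.succ)) :=
              (mProd_assoc _ _ _).symm
          _ = mProd (mPow (B 0) (c 0 + if (0 : Fin (N+1)) = 0 then 1 else 0))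
                  (seqProd fun i : Fin N => mPow (B i.succ) (c i.succ)) := by rw [hhead]
          _ = seqProd (fun i : Fin (N+1) => mPow (B i) (c i + if (0 : Fin (N+1)) = i then 1 else 0)) := by
              rw [seqProd_succ (fun i : Fin (N+1) =>
                mPow (B i) (c i + if (0 : Fin (N+1)) = i then 1 else 0)), hz]
      | succ s =>
          have hcm : mProd (B s.succ) (mPow (B 0) (c 0)) =
              mProd (mPow (B 0) (c 0)) (B s.succ) := commute_mPow (h s.succ 0) (c 0)
          have hsucc : (fun i : Fin N =>
              mPow (B i.succ) (c i.succ + if s.succ = i.succ then 1 else 0)) =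
              fun i : Fin N => mPow (B i.succ) (c i.succ + if s = i then 1 else 0) := by
            funext i
            congr 2
            simp [Fin.succ_inj]
          calc mProd (B s.succ) (seqProd fun i : Fin (N+1) => mPow (B i) (c i))
              = mProd (B s.succ) (mProd (mPow (B 0) (c 0))
                  (seqProd fun i : Fin N => mPow (B i.succ) (c i.succ))) := rfl
          _ = mProd (mProd (B s.succ) (mPow (B 0) (c 0)))
                  (seqProd fun i : Fin N => mPow (B i.succ) (c i.succ)) :=
              (mProd_assoc _ _ _).symm
          _ = mProd (mProd (mPow (B 0) (c 0)) (B s.succ))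
                  (seqProd fun i : Fin N => mPow (B i.succ) (c i.succ)) := by rw [hcm]
          _ = mProd (mPow (B 0) (c 0)) (mProd (B s.succ)
                  (seqProd fun i : Fin N => mPow (B i.succ) (c i.succ))) := mProd_assoc _ _ _
          _ = mProd (mPow (B 0) (c 0))
                  (seqProd fun i : Fin N => mPow (B i.succ) (c i.succ + if s = i then 1 else 0)) := by
              rw [ih (fun i => B i.succ) (fun i i' => h i.succ i'.succ) s (fun i => c i.succ)]
          _ = seqProd fun i : Fin (N+1) => mPow (B i) (c i + if s.succ = i then 1 else 0) := by
              have hhead2 : mPow (B 0) (c 0 + if s.succ = (0 : Fin (N+1)) then 1 else 0) =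
                  mPow (B 0) (c 0) := by
                rw [if_neg (fun hh => (Fin.succ_ne_zero s) hh)]
                norm_num
              rw [seqProd_succ (fun i : Fin (N+1) =>
                mPow (B i) (c i + if s.succ = i then 1 else 0)), hsucc, hhead2]

lemma wordProd_eq_seqProd {N p : ℕ} (A : Fin N → Matrix m m NNReal)
    (hcomm : ∀ i i', mProd (A i) (A i') = mProd (A i') (A i)) (ω : Fin p → Fin N) :
    wordProd A ω = seqProd fun i => mPow (A i) (Finset.univ.filter (fun t => ω t = i)).card := by
  induction p with
  | zero =>
      have hfam : (fun i => mPow (A i) (Finset.univ.filter (fun t : Fin 0 => ω t = i)).card) =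
          fun _ : Fin N => (1 : Matrix m m NNReal) := by
        funext i
        rw [Finset.univ_eq_empty, Finset.filter_empty, Finset.card_empty, mPow_zero]
      show (1 : Matrix m m NNReal) = _
      rw [hfam, seqProd_ones]
  | succ p ih =>
      show mProd (A (ω (Fin.last p))) (wordProd A fun i : Fin p => ω i.castSucc) = _
      rw [ih (fun i : Fin p => ω i.castSucc),
        seqProd_insert A hcomm (ω (Fin.last p)) _]
      have hfam : (fun i => mPow (A i)
          ((Finset.univ.filter fun t : Fin p => ω t.castSucc = i).card +
            if ω (Fin.last p) = i then 1 else 0)) =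
          fun i => mPow (A i) (Finset.univ.filter fun t : Fin (p+1) => ω t = i).card := by
        funext i
        congr 1
        rw [Finset.card_filter, Finset.card_filter, Fin.sum_univ_castSucc]
      rw [hfam]

end word

theorem stmt_1 (n N : ℕ) (A : Fin N → Matrix (Fin n) (Fin n) NNReal)
    (hcomm : ∀ i i', mProd (A i) (A i') = mProd (A i') (A i))
    (hmu : ∀ i, mu (A i) ≤ 1) :
    ∃ q : ℕ, 1 ≤ q ∧ ∃ Atil : Fin N → ℕ → Matrix (Fin n) (Fin n) NNReal,
      (∀ i, ∀ j : ℕ, 1 ≤ j → j ≤ q →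
        Tendsto (fun k => mPow (A i) (k * q + j)) atTop (nhds (Atil i j))) ∧
      (∀ p : ℕ, 1 ≤ p → ∀ ω : Fin p → Fin N, ∀ j : ℕ, 1 ≤ j → j ≤ q →
        Tendsto (fun k => mPow (wordProd A ω) (k * q + j)) atTop
          (nhds (seqProd fun i =>
            mPow (Atil i j) (Finset.univ.filter (fun t => ω t = i)).card))) := by
  have hq : 1 ≤ n.factorial := Nat.factorial_pos n
  have hch : ∀ (i : Fin N) (j : ℕ),
      ∃ L, Tendsto (fun k => mPow (A i) (k * n.factorial + j)) atTop (nhds L) :=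
    fun i j => exists_limits (A i) (hmu i) j
  choose Atil hAtil using hch
  refine ⟨n.factorial, hq, Atil, fun i j _ _ => hAtil i j, ?_⟩
  intro p _ ω j _ _
  have hmul : ∀ (i : Fin N) (a b : ℕ), mProd (Atil i a) (Atil i b) = Atil i (a + b) := by
    intro i a b
    have h1 : Tendsto (fun k =>
        mProd (mPow (A i) (k * n.factorial + a)) (mPow (A i) (k * n.factorial + b)))
        atTop (nhds (mProd (Atil i a) (Atil i b))) := (hAtil i a).mProd (hAtil i b)
    have heq : (fun k =>
        mProd (mPow (A i) (k * n.factorial + a)) (mPow (A i) (k * n.factorial + b)))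
        = fun k => mPow (A i) ((2 * k) * n.factorial + (a + b)) := by
      funext k
      rw [← mPow_add]
      congr 1
      ring
    rw [heq] at h1
    have h2 : Tendsto (fun k => mPow (A i) ((2 * k) * n.factorial + (a + b))) atTop
        (nhds (Atil i (a + b))) := by
      refine (hAtil i (a + b)).comp ?_
      exact tendsto_atTop_atTop.2 fun b' => ⟨b', fun k hk => by omega⟩
    exact tendsto_nhds_unique h1 h2
  have hAp : ∀ (i : Fin N) (c : ℕ), 1 ≤ c → mPow (Atil i j) c = Atil i (c * j) := by
    intro i c hc
    induction c with
    | zero => omega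
    | succ c ihc =>
        rcases Nat.eq_zero_or_pos c with rfl | hc'
        · rw [mPow_one, Nat.one_mul]
        · rw [mPow_succ, ihc hc', hmul]
          congr 1
          ring
  have hper : ∀ (i : Fin N) (c : ℕ), Tendsto (fun k => mPow (A i) (c * (k * n.factorial + j)))
      atTop (nhds (mPow (Atil i j) c)) := by
    intro i c
    rcases Nat.eq_zero_or_pos c with rfl | hc
    · simp only [Nat.zero_mul, mPow_zero]
      exact tendsto_const_nhds
    · rw [hAp i c hc]
      have heq : (fun k => mPow (A i) (c * (k * n.factorial + j)))
          = fun k => mPow (A i) ((c * k) * n.factorial + c * j) := by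
        funext k
        congr 1
        ring
      rw [heq]
      refine (hAtil i (c * j)).comp ?_
      refine tendsto_atTop_atTop.2 fun b' => ⟨b', fun k hk => ?_⟩
      calc b' ≤ k := hk
      _ ≤ c * k := Nat.le_mul_of_pos_left k hc
  have hkey : ∀ M : ℕ, mPow (wordProd A ω) M =
      seqProd fun i => mPow (A i) ((Finset.univ.filter (fun t => ω t = i)).card * M) := by
    intro M
    rw [wordProd_eq_seqProd A hcomm ω,
      mPow_seqProd (fun i i' => commute_mPow_mPow (hcomm i i') _ _) M]
    have hfam : (fun i => mPow (mPow (A i) (Finset.univ.filter (fun t => ω t = i)).card) M)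
        = fun i => mPow (A i) ((Finset.univ.filter (fun t => ω t = i)).card * M) := by
      funext i
      rw [mPow_mPow]
    rw [hfam]
  have hfin := tendsto_seqProd
    (fun i => hper i ((Finset.univ.filter (fun t => ω t = i)).card))
  have heq2 : (fun k => mPow (wordProd A ω) (k * n.factorial + j))
      = fun k => seqProd fun i =>
          mPow (A i) ((Finset.univ.filter (fun t => ω t = i)).card * (k * n.factorial + j)) :=
    funext fun k => hkey _
  rw [heq2]
  exact hfin
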